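/- For each s ∈ ℂ, the map Θ_s on the algebra of differential operators on the circle determined by Θ_s(t) = t and Θ_s(D) = D + s is an automorphism, and it satisfies σ_{±,b} ∘ Θ_s = σ_{±,b+s} and Θ_{-s} ∘ σ_{±,b} = σ_{±,b+s}, where σ_{±,b} are the anti-involutions with σ_{±,b}(t) = ±t and σ_{±,b}(D) = -D + b. Consequently Θ_s maps the fixed subalgebra 𝒟^{±,b} of -σ_{±,b} isomorphically onto 𝒟^{±,b-2s}. -/
import Mathlib


open Polynomial

/-- The Lie/associative algebra `𝒟` of regular differential operators on the circle,
modeled as finitely supported families `(f_k)_{k ∈ ℤ}` of polynomials, the family `a`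
representing `Σ_k t^k (a k)(D)` with `D = t ∂_t`. -/
noncomputable abbrev DOp := ℤ →₀ Polynomial ℂ

/-- Multiplication: `(t^k f(D)) ⬝ (t^l g(D)) = t^{k+l} f(D+l) g(D)`. -/
noncomputable def DOp.mul (a b : DOp) : DOp :=
  a.sum fun k f => b.sum fun l g =>
    Finsupp.single (k + l) (f.comp (X + C (l : ℂ)) * g)

/-- The automorphism `Θ_s`: `t^k f(D) ↦ t^k f(D + s)`. -/
noncomputable def Theta (s : ℂ) (a : DOp) : DOp :=
  a.sum fun k f => Finsupp.single k (f.comp (X + C s))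

/-- The anti-involution `σ_{ε,b}` (ε = ±1): `t^k f(D) ↦ ε^k t^k f(-D - k + b)`. -/
noncomputable def sigmaPM (ε b : ℂ) (a : DOp) : DOp :=
  a.sum fun k f => Finsupp.single k (ε ^ k • f.comp (C b - C (k : ℂ) - X))


lemma Theta_eq_mapRange (s : ℂ) (a : DOp) :
    Theta s a = a.mapRange (·.comp (X + C s)) (by simp) := by
  classical
  ext m
  rw [Theta, Finsupp.sum_apply, Finsupp.mapRange_apply, Finsupp.sum]
  simp only [Finsupp.single_apply, Finset.sum_ite_eq']
  split
  · rfl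
  · simp_all [Finsupp.notMem_support_iff]

lemma sigmaPM_apply (ε b : ℂ) (a : DOp) (m : ℤ) :
    sigmaPM ε b a m = ε ^ m • (a m).comp (C b - C (m : ℂ) - X) := by
  classical
  rw [sigmaPM, Finsupp.sum_apply, Finsupp.sum]
  simp only [Finsupp.single_apply, Finset.sum_ite_eq']
  split
  · rfl
  · simp_all [Finsupp.notMem_support_iff]

lemma Theta_apply (s : ℂ) (a : DOp) (m : ℤ) :
    Theta s a m = (a m).comp (X + C s) := by
  rw [Theta_eq_mapRange, Finsupp.mapRange_apply]

lemma Theta_add (s : ℂ) (a b : DOp) : Theta s (a + b) = Theta s a + Theta s b := by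
  ext m; simp [Theta_apply, add_comp]

lemma Theta_smul (c s : ℂ) (a : DOp) : Theta s (c • a) = c • Theta s a := by
  ext m; simp [Theta_apply, smul_comp]

lemma Theta_zero (s : ℂ) : Theta s 0 = 0 := by simp [Theta]

noncomputable def ThetaHom (s : ℂ) : DOp →+ DOp where
  toFun := Theta s
  map_zero' := Theta_zero s
  map_add' := Theta_add s

lemma Theta_single (s : ℂ) (n : ℤ) (f : Polynomial ℂ) :
    Theta s (Finsupp.single n f) = Finsupp.single n (f.comp (X + C s)) := by
  classical
  ext m
  rw [Theta_apply, Finsupp.single_apply, Finsupp.single_apply]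
  split <;> simp

lemma Theta_Theta (s t : ℂ) (a : DOp) : Theta s (Theta t a) = Theta (t + s) a := by
  ext m
  rw [Theta_apply, Theta_apply, Theta_apply, comp_assoc]
  congr 1
  rw [add_comp, X_comp, C_comp, add_assoc, ← C_add, add_comm s t]

lemma Theta_mul (s : ℂ) (a b : DOp) :
    Theta s (DOp.mul a b) = DOp.mul (Theta s a) (Theta s b) := by
  rw [DOp.mul]
  show ThetaHom s _ = _
  simp only [map_finsuppSum]
  rw [DOp.mul, Theta_eq_mapRange s a, Theta_eq_mapRange s b,
    Finsupp.sum_mapRange_index (by simp)]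
  refine Finsupp.sum_congr fun k _ => ?_
  rw [Finsupp.sum_mapRange_index (by simp)]
  refine Finsupp.sum_congr fun l _ => ?_
  show Theta s _ = _
  rw [Theta_single]
  congr 1
  simp only [mul_comp, comp_assoc, add_comp, X_comp, C_comp]
  ring_nf

lemma sigma_Theta (ε b s : ℂ) (a : DOp) :
    sigmaPM ε b (Theta s a) = sigmaPM ε (b + s) a := by
  ext m
  rw [sigmaPM_apply, sigmaPM_apply, Theta_apply, comp_assoc]
  congr 2
  simp only [add_comp, X_comp, C_comp, C_add]
  ring

lemma Theta_sigma (ε b s : ℂ) (a : DOp) :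
    Theta s (sigmaPM ε b a) = sigmaPM ε (b - s) a := by
  ext m
  rw [Theta_apply, sigmaPM_apply, sigmaPM_apply, smul_comp, comp_assoc]
  congr 2
  simp only [sub_comp, add_comp, X_comp, C_comp, C_sub]
  ring

lemma Theta_id (a : DOp) : Theta 0 a = a := by
  ext m; rw [Theta_apply]; simp

lemma Theta_neg (s : ℂ) (a : DOp) : Theta s (-a) = -Theta s a := by
  ext m; simp [Theta_apply, neg_comp]

lemma Theta_inj (s : ℂ) : Function.Injective (Theta s) := by
  intro a a' h
  have := congrArg (Theta (-s)) h
  rwa [Theta_Theta, Theta_Theta, add_neg_cancel, Theta_id, Theta_id] at this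

/-- `Θ_s` is an automorphism, `σ_{±,b} ∘ Θ_s = σ_{±,b+s}`,
`Θ_{-s} ∘ σ_{±,b} = σ_{±,b+s}`, and `Θ_s` maps the `-σ_{±,b}`-fixed subalgebra
`𝒟^{±,b}` onto `𝒟^{±,b-2s}`. -/
theorem theta_automorphism_and_sigma_relations (s b : ℂ) (ε : ℂ) (hε : ε = 1 ∨ ε = -1) :
    (∀ a b' : DOp, Theta s (DOp.mul a b') = DOp.mul (Theta s a) (Theta s b')) ∧
    (∀ a b' : DOp, Theta s (a + b') = Theta s a + Theta s b') ∧
    (∀ (c : ℂ) (a : DOp), Theta s (c • a) = c • Theta s a) ∧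
    (∀ a : DOp, Theta s (Theta (-s) a) = a) ∧
    (∀ a : DOp, Theta (-s) (Theta s a) = a) ∧
    (∀ a : DOp, sigmaPM ε b (Theta s a) = sigmaPM ε (b + s) a) ∧
    (∀ a : DOp, Theta (-s) (sigmaPM ε b a) = sigmaPM ε (b + s) a) ∧
    (Theta s '' {a : DOp | sigmaPM ε b a = -a} = {a : DOp | sigmaPM ε (b - 2 * s) a = -a}) := by
  have key : ∀ a : DOp, sigmaPM ε (b - 2 * s) (Theta s a) = Theta s (sigmaPM ε b a) := by
    intro a
    rw [sigma_Theta, Theta_sigma]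
    congr 1; ring
  refine ⟨Theta_mul s, Theta_add s, fun c a => Theta_smul c s a,
    fun a => by rw [Theta_Theta, neg_add_cancel, Theta_id],
    fun a => by rw [Theta_Theta, add_neg_cancel, Theta_id],
    fun a => sigma_Theta ε b s a,
    fun a => by simpa using Theta_sigma ε b (-s) a, ?_⟩
  ext x
  constructor
  · rintro ⟨a, ha, rfl⟩
    show sigmaPM ε (b - 2 * s) (Theta s a) = -Theta s a
    rw [key, ha, Theta_neg]
  · intro hx
    refine ⟨Theta (-s) x, ?_, by rw [Theta_Theta, neg_add_cancel, Theta_id]⟩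
    apply Theta_inj s
    rw [Theta_neg, Theta_Theta, neg_add_cancel, Theta_id, ← key, Theta_Theta,
      neg_add_cancel, Theta_id]
    exact hx
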